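/- There is no rational number α with α ≠ 1/2 and α ≠ 1 such that λ = ((2α+1)/(2α−1))²·((α+1)/(α−1)) satisfies 5184·(λ² − λ + 1)³ = 389017·λ²(λ − 1)². -/

import Mathlib

set_option maxRecDepth 100000 in
lemma key61 : ∀ x y : ZMod 61,
    21233664*x^18 - 24570953728*x^16*y^2 + 83793969152*x^14*y^4
      + 5852134400*x^12*y^6 + 88671543296*x^10*y^8 + 19208482688*x^8*y^10
      + 2902117184*x^6*y^12 + 428928860*x^4*y^14 + 13329800*x^2*y^16
      - 1416100*y^18 = 0 → x = 0 ∧ y = 0 := by decide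

/-- There is no rational `α ≠ 1/2, 1` such that `l = ((2α+1)/(2α−1))²·((α+1)/(α−1))`
satisfies `5184(l² − l + 1)³ = 389017 l²(l − 1)²`. -/
theorem no_rational_solutions_first_case :
    ¬ ∃ α : ℚ, α ≠ 1 / 2 ∧ α ≠ 1 ∧
      (let l : ℚ := ((2 * α + 1) / (2 * α - 1)) ^ 2 * ((α + 1) / (α - 1));
        5184 * (l ^ 2 - l + 1) ^ 3 = 389017 * l ^ 2 * (l - 1) ^ 2) := by
  rintro ⟨α, h1, h2, h⟩
  simp only [] at h
  have hd1 : 2 * α - 1 ≠ 0 := by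
    intro hc; apply h1; linarith [sub_eq_zero.mp hc]
  have hd2 : α - 1 ≠ 0 := sub_ne_zero.mpr h2
  have hM : (2 * α - 1) ^ 2 * (α - 1) ≠ 0 := mul_ne_zero (pow_ne_zero _ hd1) hd2
  field_simp at h
  have h7 : ((2 * α - 1) ^ 2 * (α - 1)) ^ 7 *
      (21233664*α^18 - 24570953728*α^16 + 83793969152*α^14 + 5852134400*α^12
      + 88671543296*α^10 + 19208482688*α^8 + 2902117184*α^6 + 428928860*α^4
      + 13329800*α^2 - 1416100) = 0 := by linear_combination ((2 * α - 1) ^ 2 * (α - 1)) ^ 7 * h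
  have hP : 21233664*α^18 - 24570953728*α^16 + 83793969152*α^14 + 5852134400*α^12
      + 88671543296*α^10 + 19208482688*α^8 + 2902117184*α^6 + 428928860*α^4
      + 13329800*α^2 - 1416100 = 0 :=
    (mul_eq_zero.mp h7).resolve_left (pow_ne_zero 7 hM)
  set p : ℤ := α.num with hp
  set q : ℤ := (α.den : ℤ) with hq
  have hq0 : (q : ℚ) ≠ 0 := by
    simp [hq, α.den_nz]
  have hpq : (p : ℚ) = α * (q : ℚ) := by
    rw [hp, hq]
    push_cast
    field_simp [Rat.num_div_den]
    exact (Rat.mul_den_eq_num α).symm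
  have hZ : ((21233664*p^18 - 24570953728*p^16*q^2 + 83793969152*p^14*q^4
      + 5852134400*p^12*q^6 + 88671543296*p^10*q^8 + 19208482688*p^8*q^10
      + 2902117184*p^6*q^12 + 428928860*p^4*q^14 + 13329800*p^2*q^16
      - 1416100*q^18 : ℤ) : ℚ) = 0 := by
    push_cast
    rw [hpq]
    linear_combination (q : ℚ)^18 * hP
  have hZ' : (21233664*p^18 - 24570953728*p^16*q^2 + 83793969152*p^14*q^4
      + 5852134400*p^12*q^6 + 88671543296*p^10*q^8 + 19208482688*p^8*q^10
      + 2902117184*p^6*q^12 + 428928860*p^4*q^14 + 13329800*p^2*q^16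
      - 1416100*q^18 : ℤ) = 0 := by exact_mod_cast hZ
  have h61 : (21233664*(p : ZMod 61)^18 - 24570953728*(p : ZMod 61)^16*(q : ZMod 61)^2
      + 83793969152*(p : ZMod 61)^14*(q : ZMod 61)^4
      + 5852134400*(p : ZMod 61)^12*(q : ZMod 61)^6
      + 88671543296*(p : ZMod 61)^10*(q : ZMod 61)^8
      + 19208482688*(p : ZMod 61)^8*(q : ZMod 61)^10
      + 2902117184*(p : ZMod 61)^6*(q : ZMod 61)^12
      + 428928860*(p : ZMod 61)^4*(q : ZMod 61)^14
      + 13329800*(p : ZMod 61)^2*(q : ZMod 61)^16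
      - 1416100*(q : ZMod 61)^18) = 0 := by
    have := congrArg (fun n : ℤ => (n : ZMod 61)) hZ'
    push_cast at this
    linear_combination this
  obtain ⟨hp0, hq0'⟩ := key61 _ _ h61
  have hdp : (61 : ℤ) ∣ p := by
    rwa [ZMod.intCast_zmod_eq_zero_iff_dvd] at hp0
  have hdq : (61 : ℤ) ∣ q := by
    rwa [ZMod.intCast_zmod_eq_zero_iff_dvd] at hq0'
  rw [hp] at hdp
  rw [hq] at hdq
  have hcop := α.reduced
  have hnp : (61 : ℕ) ∣ α.num.natAbs := by
    have := Int.natAbs_dvd_natAbs.mpr hdp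
    simpa using this
  have hnq : (61 : ℕ) ∣ α.den := by exact_mod_cast hdq
  have : (61 : ℕ) ∣ 1 := hcop ▸ Nat.dvd_gcd hnp hnq
  omega
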